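/- arXiv:1608.06492 — 4 statements merged into one kernel-verified Lean document; each statement's English description precedes it below -/
import Mathlib

section
/- Let V be a finite nonempty type with n = |V|, let V_I ⊆ V and S ⊆ V_I. Let μ be a probability mass function on functions ρ : V → V → Bool (a random 'infects-within-τ' relation), and let w be drawn uniformly from V, independently of ρ. Define the symmetric difference D(ρ) = |{u ∈ V_I : ∀ s ∈ S, ¬ ρ s u}| + |{v ∉ V_I : ∃ s ∈ S, ρ s v}|, and the truncated reverse reachable (RR) set of source w under ρ as R(ρ,w) = {x ∈ V_I : ρ x w}. Let X(ρ,w) = 1 if either (w ∈ V_I and S ∩ R(ρ,w) = ∅) or (w ∉ V_I and S ∩ R(ρ,w) ≠ ∅), and X(ρ,w) = 0 otherwise. Then E[X] = E[D]/n, where E[X] is taken over the product of μ with the uniform distribution on V, and E[D] over μ. -/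
/-- With `ρ` a random "infects-within-τ" relation distributed by a PMF `μ`
and `w` uniform on `V` (independent of `ρ`), the expectation of the indicator `X` that
the truncated RR set with source `w` is a blue set missed by `S` or a red set hit by `S`
equals `E[D]/n`, where `D` is the symmetric difference of the cascade from `S` with `V_I`. -/
theorem rr_set_expectation
    {V : Type*} [Fintype V] [Nonempty V] [DecidableEq V]
    (V_I S : Finset V) (hS : S ⊆ V_I) (μ : PMF (V → V → Bool)) :
    (∑ ρ : V → V → Bool, ∑ w : V,
      (μ ρ).toReal * (1 / (Fintype.card V : ℝ)) *
        (if (w ∈ V_I ∧ S ∩ V_I.filter (fun x => ρ x w) = ∅)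
            ∨ (w ∉ V_I ∧ S ∩ V_I.filter (fun x => ρ x w) ≠ ∅) then (1 : ℝ) else 0))
    = (∑ ρ : V → V → Bool, (μ ρ).toReal *
        (((V_I.filter (fun u => ∀ s ∈ S, ¬ ρ s u)).card : ℝ)
          + ((V_Iᶜ.filter (fun v => ∃ s ∈ S, ρ s v)).card : ℝ)))
      / (Fintype.card V : ℝ) := by
  rw [Finset.sum_div]
  refine Finset.sum_congr rfl fun ρ _ => ?_
  have hiff : ∀ w : V, (S ∩ V_I.filter (fun x => ρ x w) = ∅) ↔ (∀ s ∈ S, ¬ ρ s w) := by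
    intro w
    rw [Finset.eq_empty_iff_forall_notMem]
    constructor
    · intro h s hs hr
      exact h s (Finset.mem_inter.mpr ⟨hs, Finset.mem_filter.mpr ⟨hS hs, hr⟩⟩)
    · intro h s hs
      rw [Finset.mem_inter, Finset.mem_filter] at hs
      exact h s hs.1 hs.2.2
  have hsum : (∑ w : V,
      (if (w ∈ V_I ∧ S ∩ V_I.filter (fun x => ρ x w) = ∅)
          ∨ (w ∉ V_I ∧ S ∩ V_I.filter (fun x => ρ x w) ≠ ∅) then (1 : ℝ) else 0))
      = ((V_I.filter (fun u => ∀ s ∈ S, ¬ ρ s u)).card : ℝ)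
        + ((V_Iᶜ.filter (fun v => ∃ s ∈ S, ρ s v)).card : ℝ) := by
    rw [← Finset.sum_add_sum_compl V_I]
    congr 1
    · rw [Finset.card_filter, Nat.cast_sum, Finset.sum_congr rfl]
      intro w hw
      have h2 : ¬ (w ∉ V_I ∧ S ∩ V_I.filter (fun x => ρ x w) ≠ ∅) := fun h => h.1 hw
      simp [hw, h2, hiff w]
    · rw [Finset.card_filter, Nat.cast_sum, Finset.sum_congr rfl]
      intro w hw
      rw [Finset.mem_compl] at hw
      have h1 : ¬ (w ∈ V_I ∧ S ∩ V_I.filter (fun x => ρ x w) = ∅) := fun h => hw h.1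
      have h3 : (S ∩ V_I.filter (fun x => ρ x w) ≠ ∅) ↔ (∃ s ∈ S, ρ s w) := by
        rw [Ne, hiff w]; push_neg; rfl
      simp [hw, h1, h3]
  rw [← Finset.mul_sum, hsum]
  ring
end

section
/- (Estimation accuracy with Λ-scaled sample size; i.i.d. form of Lemma 3.) Let X_1, X_2, … be i.i.d. random variables taking values in [0,1] with mean μ > 0, let c = 2(e−2), let δ ∈ (0,1), k ∈ ℕ, ε ∈ (0,1), and let ν > 0 satisfy ε·√(ν·μ) ≤ μ. Set Λ = (1+ε)·2c·( ln(2/δ) + k·ln 2 + 1 ) / ε². Then for every natural number T with T ≥ Λ/ν, Pr[ | (1/T) Σ_{i=1}^T X_i − μ | ≥ ε·√(ν·μ) ] ≤ δ / (2^k + 1). -/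
open MeasureTheory ProbabilityTheory

lemma real_exp_tsum (u : ℝ) : Real.exp u = ∑' n : ℕ, u ^ n / n.factorial := by
  rw [Real.exp_eq_exp_ℝ, NormedSpace.exp_eq_tsum_div]

lemma shift_summable (u : ℝ) (k : ℕ) :
    Summable (fun n : ℕ => u ^ (n + k) / (n + k).factorial) :=
  (summable_nat_add_iff (f := fun n : ℕ => u ^ n / n.factorial) k).2
    (Real.summable_pow_div_factorial u)

lemma expand_exp (v : ℝ) :
    Real.exp v = 1 + v + ∑' n : ℕ, v ^ (n + 2) / (n + 2).factorial := by
  have hsv : Summable (fun n : ℕ => v ^ n / n.factorial) := Real.summable_pow_div_factorial v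
  have hsv1 := shift_summable v 1
  rw [real_exp_tsum, Summable.tsum_eq_zero_add hsv, Summable.tsum_eq_zero_add hsv1]
  simp [add_assoc]

lemma exp_quad_bound {u : ℝ} (h1 : -1 ≤ u) (h2 : u ≤ 1) :
    Real.exp u ≤ 1 + u + (Real.exp 1 - 2) * u ^ 2 := by
  rcases le_or_gt 0 u with hu | hu
  · have he : Real.exp 1 = 1 + 1 + ∑' n : ℕ, (1:ℝ) ^ (n + 2) / (n + 2).factorial := expand_exp 1
    have hu' := expand_exp u
    have key : ∑' n : ℕ, u ^ (n + 2) / (n + 2).factorial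
        ≤ u ^ 2 * ∑' n : ℕ, (1:ℝ) ^ (n + 2) / (n + 2).factorial := by
      rw [← tsum_mul_left]
      refine Summable.tsum_le_tsum (fun n => ?_) (shift_summable u 2)
        ((shift_summable 1 2).mul_left _)
      rw [one_pow, mul_div_assoc', mul_one]
      apply div_le_div_of_nonneg_right ?_ (by positivity)
      calc u ^ (n + 2) = u ^ n * u ^ 2 := by ring
        _ ≤ 1 * u ^ 2 := by
            apply mul_le_mul_of_nonneg_right (pow_le_one₀ hu h2) (by positivity)
        _ = u ^ 2 := one_mul _
    have : Real.exp 1 - 2 = ∑' n : ℕ, (1:ℝ) ^ (n + 2) / (n + 2).factorial := by linarith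
    rw [this]
    nlinarith [key, hu']
  · have hb := Real.exp_bound (x := u) (by rw [abs_le]; constructor <;> linarith) (n := 4)
      (by norm_num)
    have hsum : (∑ i ∈ Finset.range 4, u ^ i / i.factorial)
        = 1 + u + u ^ 2 / 2 + u ^ 3 / 6 := by
      rw [Finset.sum_range_succ, Finset.sum_range_succ, Finset.sum_range_succ,
        Finset.sum_range_succ, Finset.sum_range_zero]
      norm_num [Nat.factorial]
    rw [hsum] at hb
    have habs : |u| ^ 4 = u ^ 4 := by
      rw [← abs_pow, abs_of_nonneg (by positivity)]
    rw [habs] at hb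
    norm_num [Nat.factorial] at hb
    have h1u : u ^ 2 ≤ 1 := by nlinarith
    have h4 : u ^ 4 ≤ u ^ 2 := by nlinarith [mul_le_mul_of_nonneg_left h1u (sq_nonneg u)]
    have h3 : u ^ 3 ≤ 0 := by nlinarith [sq_nonneg u]
    have he9 : (2.7182818283 : ℝ) < Real.exp 1 := Real.exp_one_gt_d9
    have hb' := abs_le.1 hb
    nlinarith [hb'.1, hb'.2, sq_nonneg u]

lemma mgf_le_of_Icc {Ω : Type*} [MeasurableSpace Ω] (μ : Measure Ω) [IsProbabilityMeasure μ]
    (Y : Ω → ℝ) (hY : Measurable Y) (hr : ∀ᵐ ω ∂μ, Y ω ∈ Set.Icc (0:ℝ) 1) {m t : ℝ}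
    (hmean : ∫ ω, Y ω ∂μ = m) (ht : |t| ≤ 1) :
    mgf Y μ t ≤ Real.exp ((t + (Real.exp 1 - 2) * t ^ 2) * m) := by
  have he9 : (2.7182818283 : ℝ) < Real.exp 1 := Real.exp_one_gt_d9
  have hYint : Integrable Y μ := by
    refine (integrable_const (1:ℝ)).mono' hY.aestronglyMeasurable ?_
    filter_upwards [hr] with ω h
    rw [Real.norm_eq_abs, abs_le]; exact ⟨by linarith [h.1], h.2⟩
  have ht' := abs_le.1 ht
  have hint : Integrable (fun ω => Real.exp (t * Y ω)) μ := by
    refine (integrable_const (Real.exp 1)).mono' ((hY.const_mul t).exp).aestronglyMeasurable ?_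
    filter_upwards [hr] with ω h
    rw [Real.norm_eq_abs, abs_of_pos (Real.exp_pos _), Real.exp_le_exp]
    nlinarith [h.1, h.2, abs_nonneg t, le_abs_self t, neg_abs_le t]
  have step1 : mgf Y μ t ≤ ∫ ω, (1 + (t + (Real.exp 1 - 2) * t ^ 2) * Y ω) ∂μ := by
    refine integral_mono_ae hint ((integrable_const (1:ℝ)).add (hYint.const_mul _)) ?_
    filter_upwards [hr] with ω h
    have hb : -1 ≤ t * Y ω ∧ t * Y ω ≤ 1 := by
      constructor <;> nlinarith [h.1, h.2, le_abs_self t, neg_abs_le t]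
    have := exp_quad_bound hb.1 hb.2
    have hsq : (Real.exp 1 - 2) * (t * Y ω) ^ 2 ≤ (Real.exp 1 - 2) * t ^ 2 * Y ω := by
      have : (t * Y ω) ^ 2 = t ^ 2 * Y ω ^ 2 := by ring
      rw [this]
      have h2 : Y ω ^ 2 ≤ Y ω := by nlinarith [h.1, h.2]
      have hnn : (0:ℝ) ≤ (Real.exp 1 - 2) * t ^ 2 :=
        mul_nonneg (by linarith) (sq_nonneg t)
      nlinarith [mul_le_mul_of_nonneg_left h2 hnn]
    calc Real.exp (t * Y ω) ≤ 1 + t * Y ω + (Real.exp 1 - 2) * (t * Y ω) ^ 2 := this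
      _ ≤ 1 + (t + (Real.exp 1 - 2) * t ^ 2) * Y ω := by linarith
  have step2 : ∫ ω, (1 + (t + (Real.exp 1 - 2) * t ^ 2) * Y ω) ∂μ
      = 1 + (t + (Real.exp 1 - 2) * t ^ 2) * m := by
    rw [integral_add (integrable_const _) (hYint.const_mul _), integral_const,
      integral_const_mul, hmean]
    simp
  refine step1.trans ?_
  rw [step2]
  linarith [Real.add_one_le_exp ((t + (Real.exp 1 - 2) * t ^ 2) * m)]


/-- Estimation accuracy with `Λ`-scaled sample size (i.i.d. form of Lemma 3):
with `Λ = (1+ε)·2c·(ln(2/δ) + k ln 2 + 1)/ε²` and `T ≥ Λ/ν`, the sample mean of `T`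
i.i.d. `[0,1]`-valued variables with mean `m > 0` deviates from `m` by at least
`ε·√(ν·m)` with probability at most `δ/(2^k + 1)`. -/
theorem lambda_sample_accuracy
    {Ω : Type*} [MeasurableSpace Ω] (μ : Measure Ω) [IsProbabilityMeasure μ]
    (X : ℕ → Ω → ℝ) (m : ℝ)
    (hmeas : ∀ i, Measurable (X i))
    (hindep : iIndepFun X μ)
    (hid : ∀ i j, IdentDistrib (X i) (X j) μ μ)
    (hrange : ∀ i, ∀ᵐ ω ∂μ, X i ω ∈ Set.Icc (0 : ℝ) 1)
    (hmean : ∀ i, ∫ ω, X i ω ∂μ = m) (hm : 0 < m)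
    (δ : ℝ) (hδ : δ ∈ Set.Ioo (0 : ℝ) 1) (k : ℕ)
    (ε : ℝ) (hε : ε ∈ Set.Ioo (0 : ℝ) 1)
    (ν : ℝ) (hν : 0 < ν) (hνm : ε * Real.sqrt (ν * m) ≤ m)
    (Λ : ℝ)
    (hΛ : Λ = (1 + ε) * (2 * (2 * (Real.exp 1 - 2)))
            * (Real.log (2 / δ) + k * Real.log 2 + 1) / ε ^ 2)
    (T : ℕ) (hT : Λ / ν ≤ (T : ℝ)) :
    (μ {ω | ε * Real.sqrt (ν * m)
              ≤ |(∑ i ∈ Finset.range T, X i ω) / T - m|}).toReal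
      ≤ δ / (2 ^ k + 1) := by
  obtain ⟨hδ0, hδ1⟩ := hδ
  obtain ⟨hε0, hε1⟩ := hε
  have he9 : (2.7182818283 : ℝ) < Real.exp 1 := Real.exp_one_gt_d9
  have he2 : (0.7:ℝ) < Real.exp 1 - 2 := by linarith
  have hνm0 : 0 < ν * m := mul_pos hν hm
  set s := ε * Real.sqrt (ν * m) with hs_def
  have hs0 : 0 < s := mul_pos hε0 (Real.sqrt_pos.2 hνm0)
  have hs2 : s ^ 2 = ε ^ 2 * (ν * m) := by
    rw [hs_def, mul_pow, Real.sq_sqrt hνm0.le]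
  clear_value s
  set lam := s / (2 * (Real.exp 1 - 2) * m) with hlam_def
  have hcm0 : 0 < 2 * (Real.exp 1 - 2) * m := by nlinarith
  have hlam0 : 0 < lam := div_pos hs0 hcm0
  have hlam1 : lam ≤ 1 := by
    rw [hlam_def, div_le_one hcm0]; nlinarith
  have hlamabs : |lam| ≤ 1 := abs_le.2 ⟨by linarith, hlam1⟩
  clear_value lam
  set L := Real.log (2 / δ) + k * Real.log 2 + 1 with hL_def
  clear_value L
  have hlog2 : 0 < Real.log 2 := Real.log_pos (by norm_num)
  have hlogδ : 0 < Real.log (2 / δ) := Real.log_pos (by rw [lt_div_iff₀ hδ0]; nlinarith)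
  have hL0 : 0 < L := by
    have : 0 ≤ (k:ℝ) * Real.log 2 := mul_nonneg (Nat.cast_nonneg k) hlog2.le
    rw [hL_def]; linarith
  have hΛ0 : 0 < Λ := by
    rw [hΛ]
    apply div_pos (mul_pos (mul_pos (by linarith) (by linarith)) hL0) (by positivity)
  have hT0 : 0 < (T:ℝ) := lt_of_lt_of_le (div_pos hΛ0 hν) hT
  have hTν : Λ ≤ (T:ℝ) * ν := (div_le_iff₀ hν).1 hT
  have hexpo : -(lam * ((T:ℝ) * s)) + (Real.exp 1 - 2) * lam ^ 2 * ((T:ℝ) * m)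
      = -((T:ℝ) * ν * ε ^ 2 / (2 * (2 * (Real.exp 1 - 2)))) := by
    have hm' : m ≠ 0 := hm.ne'
    have he' : Real.exp 1 - 2 ≠ 0 := by linarith
    have step1 : -(lam * ((T:ℝ) * s)) + (Real.exp 1 - 2) * lam ^ 2 * ((T:ℝ) * m)
        = -((T:ℝ) * s ^ 2 / (2 * (2 * (Real.exp 1 - 2)) * m)) := by
      rw [hlam_def]; field_simp; ring
    have step2 : (T:ℝ) * s ^ 2 / (2 * (2 * (Real.exp 1 - 2)) * m)
        = (T:ℝ) * ν * ε ^ 2 / (2 * (2 * (Real.exp 1 - 2))) := by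
      rw [hs2]; field_simp
    rw [step1, step2]
  have hLle : L ≤ (T:ℝ) * ν * ε ^ 2 / (2 * (2 * (Real.exp 1 - 2))) := by
    have hΛε : (1 + ε) * (2 * (2 * (Real.exp 1 - 2))) * L = Λ * ε ^ 2 := by
      rw [hΛ, hL_def]; field_simp
    have h2 : Λ * ε ^ 2 ≤ (T:ℝ) * ν * ε ^ 2 :=
      mul_le_mul_of_nonneg_right hTν (sq_nonneg ε)
    rw [le_div_iff₀ (by linarith : (0:ℝ) < 2 * (2 * (Real.exp 1 - 2)))]
    nlinarith [mul_nonneg (mul_nonneg hε0.le hL0.le)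
      (by linarith : (0:ℝ) ≤ 2 * (2 * (Real.exp 1 - 2)))]
  have hfinal : 2 * Real.exp (-L) ≤ δ / (2 ^ k + 1) := by
    have hp : (1:ℝ) ≤ 2 ^ k := one_le_pow₀ (by norm_num)
    have h2k : Real.exp ((k:ℝ) * Real.log 2) = (2:ℝ) ^ k := by
      rw [Real.exp_nat_mul, Real.exp_log (by norm_num : (0:ℝ) < 2)]
    have hexpL : Real.exp (-L) = δ / 2 * ((2:ℝ) ^ k)⁻¹ * (Real.exp 1)⁻¹ := by
      rw [hL_def, show -(Real.log (2 / δ) + (k:ℝ) * Real.log 2 + 1)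
          = (-(Real.log (2 / δ))) + (-((k:ℝ) * Real.log 2)) + (-1) from by ring,
        Real.exp_add, Real.exp_add, Real.exp_neg, Real.exp_neg, Real.exp_neg, h2k,
        Real.exp_log (by positivity : (0:ℝ) < 2 / δ), inv_div]
    rw [hexpL]
    have heq : 2 * (δ / 2 * ((2:ℝ) ^ k)⁻¹ * (Real.exp 1)⁻¹)
        = δ / ((2:ℝ) ^ k * Real.exp 1) := by
      field_simp
    rw [heq, div_le_div_iff₀ (by positivity) (by positivity)]
    have h1 : (2:ℝ) ^ k + 1 ≤ 2 ^ k * Real.exp 1 := by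
      have h2 : 2 * (2:ℝ) ^ k ≤ (2:ℝ) ^ k * Real.exp 1 := by
        rw [mul_comm ((2:ℝ) ^ k) (Real.exp 1)]
        exact mul_le_mul_of_nonneg_right (by linarith) (by positivity)
      linarith only [hp, h2]
    exact mul_le_mul_of_nonneg_left h1 hδ0.le
  have hrange_all : ∀ᵐ ω ∂μ, ∀ i, X i ω ∈ Set.Icc (0:ℝ) 1 := ae_all_iff.2 hrange
  have hSfun : (∑ i ∈ Finset.range T, X i) = fun ω => ∑ i ∈ Finset.range T, X i ω := by
    funext ω; exact Finset.sum_apply _ _ _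
  have hSmeas : Measurable (∑ i ∈ Finset.range T, X i) := by
    rw [hSfun]; exact Finset.measurable_sum _ (fun i _ => hmeas i)
  have hSbound : ∀ᵐ ω ∂μ, (∑ i ∈ Finset.range T, X i) ω ∈ Set.Icc (0:ℝ) (T:ℝ) := by
    filter_upwards [hrange_all] with ω h
    rw [Finset.sum_apply]
    constructor
    · exact Finset.sum_nonneg fun i _ => (h i).1
    · calc ∑ i ∈ Finset.range T, X i ω
          ≤ ∑ _i ∈ Finset.range T, (1:ℝ) := Finset.sum_le_sum fun i _ => (h i).2
        _ = (T:ℝ) := by simp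
  have hintS : ∀ t : ℝ, Integrable (fun ω => Real.exp (t * (∑ i ∈ Finset.range T, X i) ω)) μ := by
    intro t
    refine (integrable_const (Real.exp (|t| * T))).mono'
      ((hSmeas.const_mul t).exp).aestronglyMeasurable ?_
    filter_upwards [hSbound] with ω h
    rw [Real.norm_eq_abs, abs_of_pos (Real.exp_pos _), Real.exp_le_exp]
    calc t * (∑ i ∈ Finset.range T, X i) ω
        ≤ |t| * (∑ i ∈ Finset.range T, X i) ω :=
          mul_le_mul_of_nonneg_right (le_abs_self t) h.1
      _ ≤ |t| * T := mul_le_mul_of_nonneg_left h.2 (abs_nonneg t)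
  have hmgf : ∀ t : ℝ, |t| ≤ 1 → mgf (∑ i ∈ Finset.range T, X i) μ t
      ≤ Real.exp ((T:ℝ) * ((t + (Real.exp 1 - 2) * t ^ 2) * m)) := by
    intro t ht
    rw [hindep.mgf_sum hmeas]
    calc ∏ i ∈ Finset.range T, mgf (X i) μ t
        ≤ ∏ _i ∈ Finset.range T, Real.exp ((t + (Real.exp 1 - 2) * t ^ 2) * m) :=
          Finset.prod_le_prod (fun i _ => mgf_nonneg)
            (fun i _ => mgf_le_of_Icc μ (X i) (hmeas i) (hrange i) (hmean i) ht)
      _ = Real.exp ((T:ℝ) * ((t + (Real.exp 1 - 2) * t ^ 2) * m)) := by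
          rw [Finset.prod_const, ← Real.exp_nat_mul, Finset.card_range]
  set E := Real.exp (-(lam * ((T:ℝ) * s)) + (Real.exp 1 - 2) * lam ^ 2 * ((T:ℝ) * m))
    with hE_def
  clear_value E
  have hup : (μ {ω | (T:ℝ)*m + (T:ℝ)*s ≤ (∑ i ∈ Finset.range T, X i) ω}).toReal ≤ E := by
    calc (μ {ω | (T:ℝ)*m + (T:ℝ)*s ≤ (∑ i ∈ Finset.range T, X i) ω}).toReal
        ≤ Real.exp (-lam * ((T:ℝ)*m + (T:ℝ)*s)) * mgf (∑ i ∈ Finset.range T, X i) μ lam :=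
          measure_ge_le_exp_mul_mgf _ hlam0.le (hintS lam)
      _ ≤ Real.exp (-lam * ((T:ℝ)*m + (T:ℝ)*s))
            * Real.exp ((T:ℝ) * ((lam + (Real.exp 1 - 2) * lam ^ 2) * m)) :=
          mul_le_mul_of_nonneg_left (hmgf lam hlamabs) (Real.exp_pos _).le
      _ = E := by rw [hE_def, ← Real.exp_add]; congr 1; ring
  have hlow : (μ {ω | (T:ℝ)*s - (T:ℝ)*m ≤ (-(∑ i ∈ Finset.range T, X i)) ω}).toReal ≤ E := by
    have hint' : Integrable (fun ω => Real.exp (lam * (-(∑ i ∈ Finset.range T, X i)) ω)) μ := by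
      have heq : (fun ω => Real.exp (lam * (-(∑ i ∈ Finset.range T, X i)) ω))
          = (fun ω => Real.exp ((-lam) * (∑ i ∈ Finset.range T, X i) ω)) := by
        funext ω; congr 1; rw [Pi.neg_apply]; ring
      rw [heq]; exact hintS (-lam)
    calc (μ {ω | (T:ℝ)*s - (T:ℝ)*m ≤ (-(∑ i ∈ Finset.range T, X i)) ω}).toReal
        ≤ Real.exp (-lam * ((T:ℝ)*s - (T:ℝ)*m)) * mgf (-(∑ i ∈ Finset.range T, X i)) μ lam :=
          measure_ge_le_exp_mul_mgf _ hlam0.le hint'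
      _ = Real.exp (-lam * ((T:ℝ)*s - (T:ℝ)*m)) * mgf (∑ i ∈ Finset.range T, X i) μ (-lam) := by
          rw [mgf_neg]
      _ ≤ Real.exp (-lam * ((T:ℝ)*s - (T:ℝ)*m))
            * Real.exp ((T:ℝ) * ((-lam + (Real.exp 1 - 2) * (-lam) ^ 2) * m)) :=
          mul_le_mul_of_nonneg_left (hmgf (-lam) (by rwa [abs_neg])) (Real.exp_pos _).le
      _ = E := by rw [hE_def, ← Real.exp_add]; congr 1; ring
  have hsub : {ω | s ≤ |(∑ i ∈ Finset.range T, X i ω)/T - m|}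
      ⊆ {ω | (T:ℝ)*m + (T:ℝ)*s ≤ (∑ i ∈ Finset.range T, X i) ω}
        ∪ {ω | (T:ℝ)*s - (T:ℝ)*m ≤ (-(∑ i ∈ Finset.range T, X i)) ω} := by
    intro ω hω
    simp only [Set.mem_setOf_eq] at hω
    have hsum_eq : (∑ i ∈ Finset.range T, X i) ω = ∑ i ∈ Finset.range T, X i ω :=
      Finset.sum_apply _ _ _
    obtain ⟨A, hA⟩ : ∃ A : ℝ, A = ∑ i ∈ Finset.range T, X i ω := ⟨_, rfl⟩
    rw [← hA] at hω
    have hTs : (T:ℝ) * s ≤ |A - (T:ℝ) * m| := by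
      have h1 := mul_le_mul_of_nonneg_left hω hT0.le
      have heq : (T:ℝ) * |A / T - m| = |A - (T:ℝ) * m| := by
        rw [← abs_of_pos hT0, ← abs_mul]
        congr 1
        field_simp
        rw [abs_of_pos hT0]
      rw [heq] at h1
      exact h1
    rcases le_abs.1 hTs with h | h
    · left
      simp only [Set.mem_setOf_eq, hsum_eq, ← hA]
      linarith only [h]
    · right
      simp only [Set.mem_setOf_eq, Pi.neg_apply, hsum_eq, ← hA]
      linarith only [h]
  have hmain : (μ {ω | s ≤ |(∑ i ∈ Finset.range T, X i ω)/T - m|}).toReal ≤ E + E := by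
    calc (μ {ω | s ≤ |(∑ i ∈ Finset.range T, X i ω)/T - m|}).toReal
        ≤ ((μ {ω | (T:ℝ)*m + (T:ℝ)*s ≤ (∑ i ∈ Finset.range T, X i) ω})
            + μ {ω | (T:ℝ)*s - (T:ℝ)*m ≤ (-(∑ i ∈ Finset.range T, X i)) ω}).toReal := by
          apply ENNReal.toReal_mono
          · exact ENNReal.add_ne_top.2 ⟨measure_ne_top μ _, measure_ne_top μ _⟩
          · exact (measure_mono hsub).trans (measure_union_le _ _)
      _ = (μ {ω | (T:ℝ)*m + (T:ℝ)*s ≤ (∑ i ∈ Finset.range T, X i) ω}).toReal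
            + (μ {ω | (T:ℝ)*s - (T:ℝ)*m ≤ (-(∑ i ∈ Finset.range T, X i)) ω}).toReal :=
          ENNReal.toReal_add (measure_ne_top _ _) (measure_ne_top _ _)
      _ ≤ E + E := add_le_add hup hlow
  have hE_le : E ≤ Real.exp (-L) := by
    rw [hE_def, hexpo, Real.exp_le_exp]
    linarith only [hLle]
  calc (μ {ω | s ≤ |(∑ i ∈ Finset.range T, X i ω)/T - m|}).toReal
      ≤ E + E := hmain
    _ = 2 * E := by ring
    _ ≤ 2 * Real.exp (-L) := by linarith only [hE_le]
    _ ≤ δ / (2 ^ k + 1) := hfinal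
end

section
/- (Quadratic inequality core of Theorem 3.) Let Δ ≥ 1 and 0 < ε ≤ 1/(1+Δ) be real numbers, and let A > 0 and B ≥ 0 be real numbers. If (1−ε)·B ≤ Δ·( A + ε·√(A·B) ), then B ≤ (2Δ/(1−ε)²)·A. -/
/-- Quadratic inequality core of Theorem 3: if `Δ ≥ 1`,
`0 < ε ≤ 1/(1+Δ)`, `A > 0`, `B ≥ 0` and `(1-ε)·B ≤ Δ·(A + ε·√(A·B))`,
then `B ≤ (2Δ/(1-ε)²)·A`. -/
theorem quadratic_inequality_core
    (Δ ε A B : ℝ) (hΔ : 1 ≤ Δ) (hε0 : 0 < ε) (hε : ε ≤ 1 / (1 + Δ))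
    (hA : 0 < A) (hB : 0 ≤ B)
    (h : (1 - ε) * B ≤ Δ * (A + ε * Real.sqrt (A * B))) :
    B ≤ (2 * Δ / (1 - ε) ^ 2) * A := by
  have hΔ1 : (0:ℝ) < 1 + Δ := by linarith
  have hεΔ : ε * (1 + Δ) ≤ 1 := (le_div_iff₀ hΔ1).mp hε
  have hε1 : ε < 1 := by nlinarith
  have h1ε : 0 < 1 - ε := by linarith
  set s := Real.sqrt (A * B) with hs_def
  have hs0 : 0 ≤ s := Real.sqrt_nonneg _
  have hs : s ^ 2 = A * B := Real.sq_sqrt (mul_nonneg hA.le hB)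
  have hΔ0 : (0:ℝ) ≤ Δ := by linarith
  have hεΔ1 : ε * Δ ≤ 1 := by nlinarith
  have h2 : 2 * (1 - ε) ^ 2 * (A * B) ≤ 2 * Δ * (1 - ε) * A ^ 2 + 2 * Δ * ε * (1 - ε) * A * s := by
    nlinarith [mul_le_mul_of_nonneg_right h (by positivity : (0:ℝ) ≤ 2 * (1 - ε) * A)]
  have h3 : 2 * Δ * ε * (1 - ε) * A * s ≤ ε ^ 2 * Δ ^ 2 * A ^ 2 + (1 - ε) ^ 2 * (A * B) := by
    nlinarith [sq_nonneg (ε * Δ * A - (1 - ε) * s), hs]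
  have h4 : (1 - ε) ^ 2 * (A * B) ≤ 2 * Δ * A ^ 2 := by
    nlinarith [mul_nonneg (mul_nonneg (mul_nonneg hε0.le hΔ0) (by nlinarith : (0:ℝ) ≤ 2 - ε * Δ)) (sq_nonneg A)]
  have h4' : (1 - ε) ^ 2 * B * A ≤ 2 * Δ * A * A := by nlinarith [h4]
  have key : (1 - ε) ^ 2 * B ≤ 2 * Δ * A := le_of_mul_le_mul_right h4' hA
  rw [div_mul_eq_mul_div, le_div_iff₀ (by positivity)]
  linarith [key, mul_comm B ((1-ε)^2)]
end

section
/- (Deterministic chain establishing the 2Δ/(1−ε)² approximation factor of Theorem 3.) Let Δ ≥ 1 and 0 < ε ≤ 1/(1+Δ) be real numbers, let OPT > 0 and E ≥ 0 be real numbers, and let D̂ and D* be real numbers such that: (i) (1−ε)·E ≤ D̂ (the estimator does not underestimate E[D(Ŝ)] by more than a (1−ε)-factor), (ii) D* ≤ OPT + ε·√(OPT·E) (the estimator does not overestimate the optimum by more than the additive error), and (iii) D̂ ≤ Δ·D* (the Δ-approximation guarantee of the submodular-cost covering algorithm on the sampled instance). Then E ≤ (2Δ/(1−ε)²)·OPT.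 -/
/-- Deterministic chain establishing the `2Δ/(1-ε)²` approximation
factor of Theorem 3. -/
theorem approximation_factor_chain
    (Δ ε OPT E D_hat D_star : ℝ)
    (hΔ : 1 ≤ Δ) (hε0 : 0 < ε) (hε : ε ≤ 1 / (1 + Δ))
    (hOPT : 0 < OPT) (hE : 0 ≤ E)
    (h1 : (1 - ε) * E ≤ D_hat)
    (h2 : D_star ≤ OPT + ε * Real.sqrt (OPT * E))
    (h3 : D_hat ≤ Δ * D_star) :
    E ≤ (2 * Δ / (1 - ε) ^ 2) * OPT := by
  have hΔ1 : (0:ℝ) < 1 + Δ := by linarith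
  have hεΔ : ε * (1 + Δ) ≤ 1 := by
    rw [div_eq_mul_inv, one_mul] at hε
    calc ε * (1 + Δ) ≤ (1 + Δ)⁻¹ * (1 + Δ) := by
          exact mul_le_mul_of_nonneg_right hε (le_of_lt hΔ1)
      _ = 1 := inv_mul_cancel₀ (ne_of_gt hΔ1)
  have hε1 : ε < 1 := by nlinarith
  have hs : Real.sqrt (OPT * E) ≤ (OPT + E) / 2 := by
    have h : OPT * E ≤ ((OPT + E) / 2) ^ 2 := by nlinarith [sq_nonneg (OPT - E)]
    calc Real.sqrt (OPT * E) ≤ Real.sqrt (((OPT + E) / 2) ^ 2) := Real.sqrt_le_sqrt h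
      _ = (OPT + E) / 2 := Real.sqrt_sq (by positivity)
  have h1ε : (0:ℝ) < 1 - ε := by linarith
  have key : E * (1 - ε) ^ 2 ≤ 2 * Δ * OPT := by
    have hchain : (1 - ε) * E ≤ Δ * OPT + Δ * ε * ((OPT + E) / 2) := by
      have : Δ * D_star ≤ Δ * (OPT + ε * Real.sqrt (OPT * E)) :=
        mul_le_mul_of_nonneg_left h2 (by linarith)
      have h4 : Δ * ε * Real.sqrt (OPT * E) ≤ Δ * ε * ((OPT + E) / 2) :=
        mul_le_mul_of_nonneg_left hs (by positivity)
      nlinarith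
    -- εΔ ≤ 1 - ε
    have hεΔ' : ε * Δ ≤ 1 - ε := by nlinarith
    nlinarith [mul_le_mul_of_nonneg_left hchain (le_of_lt h1ε),
      mul_nonneg hE (le_of_lt hε0), mul_nonneg hOPT.le hε0.le,
      mul_nonneg (mul_nonneg hE hε0.le) hε0.le,
      mul_nonneg (mul_nonneg hOPT.le hε0.le) hε0.le]
  have hsq : (0:ℝ) < (1 - ε) ^ 2 := by positivity
  rw [div_mul_eq_mul_div, le_div_iff₀ hsq]
  linarith
end
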